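/- Let μ > 0, and let f̃ : [0,∞)×ℝ² → ℝ and g̃ : [0,∞)×ℝ² → (0,∞) be continuous with g̃ positive-valued. Define V(x) := (2/(μ²+2−μ√(μ²+4)))·(x₁² + (x₂+μx₁)²) and k(t,x) := −((1+μ²)x₁ + 2μx₂ + f̃(t,x))/g̃(t,x). Then for all (t,x) ∈ [0,∞)×ℝ²: ∂V/∂x₁(x)·x₂ + ∂V/∂x₂(x)·(f̃(t,x) + g̃(t,x)·k(t,x)) = −2μ·V(x). -/

import Mathlib

noncomputable def V12 (μ : ℝ) (x : EuclideanSpace ℝ (Fin 2)) : ℝ :=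
  (2 / (μ ^ 2 + 2 - μ * Real.sqrt (μ ^ 2 + 4))) * ((x 0) ^ 2 + (x 1 + μ * x 0) ^ 2)

noncomputable def k12 (μ : ℝ) (ftil gtil : ℝ → EuclideanSpace ℝ (Fin 2) → ℝ)
    (t : ℝ) (x : EuclideanSpace ℝ (Fin 2)) : ℝ :=
  -(((1 + μ ^ 2) * x 0 + 2 * μ * x 1 + ftil t x) / gtil t x)

lemma hasFDerivV12 (μ : ℝ) (x : EuclideanSpace ℝ (Fin 2)) :
    HasFDerivAt (V12 μ)
      ((2 / (μ ^ 2 + 2 - μ * Real.sqrt (μ ^ 2 + 4))) •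
        ((2 * x 0) • (EuclideanSpace.proj (0 : Fin 2) : EuclideanSpace ℝ (Fin 2) →L[ℝ] ℝ)
          + (2 * (x 1 + μ * x 0)) •
            ((EuclideanSpace.proj (1 : Fin 2) : EuclideanSpace ℝ (Fin 2) →L[ℝ] ℝ)
              + μ • (EuclideanSpace.proj (0 : Fin 2) : EuclideanSpace ℝ (Fin 2) →L[ℝ] ℝ)))) x := by
  have h0 : HasFDerivAt (fun y : EuclideanSpace ℝ (Fin 2) => y 0)
      (EuclideanSpace.proj (0 : Fin 2) : EuclideanSpace ℝ (Fin 2) →L[ℝ] ℝ) x :=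
    (EuclideanSpace.proj (0 : Fin 2) : EuclideanSpace ℝ (Fin 2) →L[ℝ] ℝ).hasFDerivAt
  have h1 : HasFDerivAt (fun y : EuclideanSpace ℝ (Fin 2) => y 1)
      (EuclideanSpace.proj (1 : Fin 2) : EuclideanSpace ℝ (Fin 2) →L[ℝ] ℝ) x :=
    (EuclideanSpace.proj (1 : Fin 2) : EuclideanSpace ℝ (Fin 2) →L[ℝ] ℝ).hasFDerivAt
  have hsum : HasFDerivAt (fun y : EuclideanSpace ℝ (Fin 2) => y 1 + μ * y 0)
      ((EuclideanSpace.proj (1 : Fin 2) : EuclideanSpace ℝ (Fin 2) →L[ℝ] ℝ)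
        + μ • (EuclideanSpace.proj (0 : Fin 2) : EuclideanSpace ℝ (Fin 2) →L[ℝ] ℝ)) x :=
    h1.add (h0.const_mul μ)
  have hsq0 : HasFDerivAt (fun y : EuclideanSpace ℝ (Fin 2) => (y 0) ^ 2)
      ((2 * x 0) • (EuclideanSpace.proj (0 : Fin 2) : EuclideanSpace ℝ (Fin 2) →L[ℝ] ℝ)) x := by
    simpa using h0.pow 2
  have hsq1 : HasFDerivAt (fun y : EuclideanSpace ℝ (Fin 2) => (y 1 + μ * y 0) ^ 2)
      ((2 * (x 1 + μ * x 0)) • ((EuclideanSpace.proj (1 : Fin 2) : EuclideanSpace ℝ (Fin 2) →L[ℝ] ℝ)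
        + μ • (EuclideanSpace.proj (0 : Fin 2) : EuclideanSpace ℝ (Fin 2) →L[ℝ] ℝ))) x := by
    simpa [mul_add] using hsum.pow 2
  have := ((hsq0.add hsq1).const_mul (2 / (μ ^ 2 + 2 - μ * Real.sqrt (μ ^ 2 + 4))))
  exact this

theorem stmt_12 (μ : ℝ) (hμ : 0 < μ)
    (ftil gtil : ℝ → EuclideanSpace ℝ (Fin 2) → ℝ)
    (hfc : Continuous fun p : ℝ × EuclideanSpace ℝ (Fin 2) => ftil p.1 p.2)
    (hgc : Continuous fun p : ℝ × EuclideanSpace ℝ (Fin 2) => gtil p.1 p.2)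
    (hgpos : ∀ t x, 0 < gtil t x) :
    ∀ t ≥ (0 : ℝ), ∀ x : EuclideanSpace ℝ (Fin 2),
      fderiv ℝ (V12 μ) x (EuclideanSpace.single 0 1) * x 1
        + fderiv ℝ (V12 μ) x (EuclideanSpace.single 1 1)
            * (ftil t x + gtil t x * k12 μ ftil gtil t x)
        = -(2 * μ) * V12 μ x := by
  intro t _ x
  rw [(hasFDerivV12 μ x).fderiv]
  have hg := (hgpos t x).ne'
  have hk : ftil t x + gtil t x * k12 μ ftil gtil t x
      = -((1 + μ ^ 2) * x 0 + 2 * μ * x 1) := by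
    simp only [k12]
    field_simp
    ring
  rw [hk]
  simp [V12, EuclideanSpace.single_apply]
  ring
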